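/- Let K be a nonempty subset of a metric space (X,d) and let T, f, g : K → K be self-maps with T(K) ⊆ f(K) ∩ g(K). Suppose there is a monotonically increasing continuous function ψ : [0,∞) → [0,∞) with ψ(t) < t for all t > 0 such that for all x, y ∈ K, d(Tx,Ty) ≤ ψ( min{ max{ d(fx,gy), d(Tx,fx), d(Ty,gy), (1/2)[d(Tx,gy) + d(Ty,fx)] }, max{ d(fy,gx), d(Tx,gx), d(Ty,fy), (1/2)[d(Tx,fy) + d(Ty,gx)] } } ). If {x_n} is any sequence in K satisfying Tx_{2n} = f x_{2n+1} and T x_{2n+1} = g x_{2n+2} for all n ≥ 0, then the sequence {T x_n} is a Cauchy sequence. -/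
import Mathlib

open Filter Topology

private theorem contractive_aux {X : Type*} [MetricSpace X] (y : ℕ → X) (ψ : ℝ → ℝ)
    (hψmono : MonotoneOn ψ (Set.Ici 0))
    (hψcont : ContinuousOn ψ (Set.Ici 0))
    (hψnonneg : ∀ t ≥ (0 : ℝ), 0 ≤ ψ t)
    (hψlt : ∀ t > (0 : ℝ), ψ t < t)
    (key : ∀ a b : ℕ, dist (y (2*a+1)) (y (2*b+2)) ≤
      ψ (max (max (dist (y (2*a)) (y (2*b+1))) (dist (y (2*a+1)) (y (2*a))))
          (max (dist (y (2*b+2)) (y (2*b+1)))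
            ((dist (y (2*a+1)) (y (2*b+1)) + dist (y (2*b+2)) (y (2*a))) / 2)))) :
    CauchySeq y := by
  classical
  have hψ0 : ψ 0 ≤ 0 := by
    by_contra h
    push_neg at h
    have h1 : ψ 0 ≤ ψ (ψ 0) := hψmono (Set.mem_Ici.mpr le_rfl) (Set.mem_Ici.mpr h.le) h.le
    have h2 : ψ (ψ 0) < ψ 0 := hψlt _ h
    exact absurd (h1.trans_lt h2) (lt_irrefl _)
  have hψle : ∀ t, 0 ≤ t → ψ t ≤ t := by
    intro t ht
    rcases eq_or_lt_of_le ht with h | h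
    · simpa [← h] using hψ0
    · exact (hψlt t h).le
  have squeeze : ∀ u v : ℝ, 0 ≤ u → 0 ≤ v → v ≤ ψ (max u v) → v ≤ ψ u := by
    intro u v hu hv h
    rcases le_or_gt v u with h' | h'
    · rwa [max_eq_left h'] at h
    · rw [max_eq_right h'.le] at h
      have h2 := hψlt v (hu.trans_lt h')
      linarith [hψnonneg u hu]
  have stepA : ∀ m : ℕ, dist (y (2*m+1)) (y (2*m+2)) ≤ ψ (dist (y (2*m)) (y (2*m+1))) := by
    intro m
    have h := key m m
    apply squeeze _ _ dist_nonneg dist_nonneg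
    refine h.trans (hψmono ?_ ?_ ?_)
    · exact Set.mem_Ici.mpr (le_trans dist_nonneg (le_trans (le_max_left _ _) (le_max_left _ _)))
    · exact Set.mem_Ici.mpr (le_trans dist_nonneg (le_max_left _ _))
    · have hc1 : dist (y (2*m+1)) (y (2*m)) = dist (y (2*m)) (y (2*m+1)) := dist_comm _ _
      have hc2 : dist (y (2*m+2)) (y (2*m+1)) = dist (y (2*m+1)) (y (2*m+2)) := dist_comm _ _
      have hc3 : dist (y (2*m+1)) (y (2*m+1)) = 0 := dist_self _
      have hc4 := dist_triangle (y (2*m+2)) (y (2*m+1)) (y (2*m))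
      refine max_le (max_le ?_ ?_) (max_le ?_ ?_)
      · exact le_max_left _ _
      · rw [hc1]; exact le_max_left _ _
      · rw [hc2]; exact le_max_right _ _
      · have hl := le_max_left (dist (y (2*m)) (y (2*m+1))) (dist (y (2*m+1)) (y (2*m+2)))
        have hr := le_max_right (dist (y (2*m)) (y (2*m+1))) (dist (y (2*m+1)) (y (2*m+2)))
        rw [hc3]
        linarith [hc1, hc2]
  have stepB : ∀ m : ℕ, dist (y (2*m+2)) (y (2*m+3)) ≤ ψ (dist (y (2*m+1)) (y (2*m+2))) := by
    intro m
    have h := key (m+1) m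
    rw [show 2*(m+1)+1 = 2*m+3 from by ring, show 2*(m+1) = 2*m+2 from by ring] at h
    apply squeeze _ _ dist_nonneg dist_nonneg
    have hv : dist (y (2*m+2)) (y (2*m+3)) = dist (y (2*m+3)) (y (2*m+2)) := dist_comm _ _
    rw [hv]
    refine h.trans (hψmono ?_ ?_ ?_)
    · exact Set.mem_Ici.mpr (le_trans dist_nonneg (le_trans (le_max_left _ _) (le_max_left _ _)))
    · exact Set.mem_Ici.mpr (le_trans dist_nonneg (le_max_left _ _))
    · have hc1 : dist (y (2*m+2)) (y (2*m+1)) = dist (y (2*m+1)) (y (2*m+2)) := dist_comm _ _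
      have hc3 : dist (y (2*m+2)) (y (2*m+2)) = 0 := dist_self _
      have hc4 := dist_triangle (y (2*m+3)) (y (2*m+2)) (y (2*m+1))
      refine max_le (max_le ?_ ?_) (max_le ?_ ?_)
      · rw [hc1]; exact le_max_left _ _
      · exact le_max_right _ _
      · rw [hc1]; exact le_max_left _ _
      · have hl := le_max_left (dist (y (2*m+1)) (y (2*m+2))) (dist (y (2*m+3)) (y (2*m+2)))
        have hr := le_max_right (dist (y (2*m+1)) (y (2*m+2))) (dist (y (2*m+3)) (y (2*m+2)))
        rw [hc3]
        linarith [hc1]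
  have step1 : ∀ n : ℕ, dist (y (n+1)) (y (n+2)) ≤ ψ (dist (y n) (y (n+1))) := by
    intro n
    rcases Nat.even_or_odd n with ⟨m, hm⟩ | ⟨m, hm⟩
    · have h := stepA m
      rwa [show 2*m+2 = n+2 from by omega, show 2*m+1 = n+1 from by omega,
        show 2*m = n from by omega] at h
    · have h := stepB m
      rwa [show 2*m+3 = n+2 from by omega, show 2*m+2 = n+1 from by omega,
        show 2*m+1 = n from by omega] at h
  have hanti : Antitone (fun n => dist (y n) (y (n+1))) := by
    apply antitone_nat_of_succ_le
    intro n
    exact (step1 n).trans (hψle _ dist_nonneg)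
  have hbdd : BddBelow (Set.range fun n => dist (y n) (y (n+1))) := by
    refine ⟨0, ?_⟩
    rintro r ⟨n, rfl⟩
    exact dist_nonneg
  have hlim := tendsto_atTop_ciInf hanti hbdd
  set r := ⨅ n, dist (y n) (y (n+1)) with hr
  have hr0 : 0 ≤ r := le_ciInf fun n => dist_nonneg
  have hψr : Tendsto (fun n => ψ (dist (y n) (y (n+1)))) atTop (𝓝 (ψ r)) := by
    have h1 : Tendsto (fun n => dist (y n) (y (n+1))) atTop (𝓝[Set.Ici 0] r) := by
      rw [tendsto_nhdsWithin_iff]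
      exact ⟨hlim, Filter.Eventually.of_forall fun n => Set.mem_Ici.mpr dist_nonneg⟩
    exact ((hψcont r (Set.mem_Ici.mpr hr0)).tendsto).comp h1
  have hrle : r ≤ ψ r := by
    refine le_of_tendsto_of_tendsto' (hlim.comp (tendsto_add_atTop_nat 1)) hψr ?_
    intro n
    exact step1 n
  have hr_eq : r = 0 := by
    by_contra h
    have hpos : 0 < r := lt_of_le_of_ne hr0 (Ne.symm h)
    linarith [hψlt r hpos]
  have hD0 : Tendsto (fun n => dist (y n) (y (n+1))) atTop (𝓝 0) := hr_eq ▸ hlim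
  rw [Metric.cauchySeq_iff]
  by_contra hc
  push_neg at hc
  obtain ⟨ε, hε, hbad⟩ := hc
  have claim : ∀ δ : ℝ, 0 < δ → ε ≤ ψ (ε + 5*δ) + 2*δ := by
    intro δ hδ
    obtain ⟨N₀, hN₀⟩ : ∃ N₀ : ℕ, ∀ i ≥ N₀, dist (y i) (y (i+1)) ≤ δ := by
      have h1 : ∀ᶠ i in Filter.atTop, dist (y i) (y (i+1)) ≤ δ :=
        hD0.eventually (eventually_le_nhds hδ)
      exact Filter.eventually_atTop.mp h1
    obtain ⟨m, hm, n, hn, hdist⟩ := hbad (N₀ + 2)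
    set s := min m n with hs
    set t := max m n with ht
    have hεst : ε ≤ dist (y s) (y t) := by
      rcases le_total m n with h' | h'
      · rw [hs, ht, min_eq_left h', max_eq_right h']; exact hdist
      · rw [hs, ht, min_eq_right h', max_eq_left h', dist_comm]; exact hdist
    have hsN : N₀ + 2 ≤ s := le_min hm hn
    have hst : s < t := by
      rcases lt_or_ge s t with h | h
      · exact h
      · exfalso
        have heq : s = t := le_antisymm (min_le_max) h
        rw [heq] at hεst
        simp at hεst
        linarith
    have hex : ∃ q, s < q ∧ ε ≤ dist (y s) (y q) := ⟨t, hst, hεst⟩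
    have hspec := Nat.find_spec hex
    set p := Nat.find hex with hp
    obtain ⟨hp1, hp2⟩ := hspec
    have hub : dist (y s) (y p) ≤ ε + δ := by
      rcases eq_or_lt_of_le (Nat.succ_le_of_lt hp1) with he | hl
      · have h7 := hN₀ s (by omega)
        rw [← he]
        linarith
      · have h5 : dist (y s) (y (p-1)) < ε := by
          by_contra hcc
          push_neg at hcc
          have hmin := Nat.find_min hex (m := p - 1) (by rw [← hp]; omega)
          exact hmin ⟨by omega, hcc⟩
        have h6 : dist (y (p-1)) (y p) ≤ δ := by
          have h7 := hN₀ (p-1) (by omega)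
          rwa [show p - 1 + 1 = p from by omega] at h7
        linarith [dist_triangle (y s) (y (p-1)) (y p)]
    obtain ⟨j, a, hja, hjs⟩ : ∃ j a, j = 2*a+1 ∧ (j = s ∨ j = s+1) := by
      rcases Nat.even_or_odd s with ⟨c, hcc⟩ | ⟨c, hcc⟩
      · exact ⟨s+1, c, by omega, Or.inr rfl⟩
      · exact ⟨s, c, by omega, Or.inl rfl⟩
    obtain ⟨k, b, hkb, hkp⟩ : ∃ k b, k = 2*b+2 ∧ (k = p ∨ k = p+1) := by
      rcases Nat.even_or_odd p with ⟨c, hcc⟩ | ⟨c, hcc⟩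
      · exact ⟨p, c-1, by omega, Or.inl rfl⟩
      · exact ⟨p+1, c, by omega, Or.inr rfl⟩
    have hsj : dist (y s) (y j) ≤ δ := by
      rcases hjs with rfl | rfl
      · simpa using hδ.le
      · exact hN₀ s (by omega)
    have hpk : dist (y p) (y k) ≤ δ := by
      rcases hkp with rfl | rfl
      · simpa using hδ.le
      · exact hN₀ p (by omega)
    have hjk_ub : dist (y j) (y k) ≤ ε + 3*δ := by
      have h4 := dist_triangle4 (y j) (y s) (y p) (y k)
      have h5 := dist_comm (y j) (y s)
      linarith
    have hjk_lb : ε - 2*δ ≤ dist (y j) (y k) := by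
      have h4 := dist_triangle4 (y s) (y j) (y k) (y p)
      have h5 := dist_comm (y k) (y p)
      linarith
    have hD2a : dist (y (2*a)) (y (2*a+1)) ≤ δ := hN₀ _ (by omega)
    have hD2b : dist (y (2*b+1)) (y (2*b+2)) ≤ δ := hN₀ _ (by omega)
    have hkey := key a b
    rw [← hja, ← hkb] at hkey
    have e2 : dist (y j) (y (2*a)) ≤ δ := by
      rw [dist_comm, hja]; exact hD2a
    have e3 : dist (y k) (y (2*b+1)) ≤ δ := by
      rw [dist_comm, hkb]; exact hD2b
    have hMle : max (max (dist (y (2*a)) (y (2*b+1))) (dist (y j) (y (2*a))))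
        (max (dist (y k) (y (2*b+1)))
          ((dist (y j) (y (2*b+1)) + dist (y k) (y (2*a))) / 2)) ≤ ε + 5*δ := by
      have e1 : dist (y (2*a)) (y (2*b+1)) ≤ ε + 5*δ := by
        have h4 := dist_triangle4 (y (2*a)) (y j) (y k) (y (2*b+1))
        have h5 := dist_comm (y j) (y (2*a))
        have h6 := dist_comm (y k) (y (2*b+1))
        linarith
      have e4 : (dist (y j) (y (2*b+1)) + dist (y k) (y (2*a))) / 2 ≤ ε + 4*δ := by
        have h4 := dist_triangle (y j) (y k) (y (2*b+1))
        have h5 := dist_triangle (y k) (y j) (y (2*a))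
        have h6 := dist_comm (y j) (y k)
        linarith
      refine max_le (max_le e1 ?_) (max_le ?_ ?_) <;> linarith
    have hfinal : dist (y j) (y k) ≤ ψ (ε + 5*δ) := by
      refine hkey.trans (hψmono ?_ ?_ hMle)
      · exact Set.mem_Ici.mpr (le_trans dist_nonneg (le_trans (le_max_left _ _) (le_max_left _ _)))
      · exact Set.mem_Ici.mpr (by positivity)
    linarith
  have hδseq : Tendsto (fun kk : ℕ => (1:ℝ)/(kk+1)) atTop (𝓝 0) :=
    tendsto_one_div_add_atTop_nhds_zero_nat
  have h1 : Tendsto (fun kk : ℕ => ε + 5*((1:ℝ)/(kk+1))) atTop (𝓝[Set.Ici 0] ε) := by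
    rw [tendsto_nhdsWithin_iff]
    constructor
    · have h2 := hδseq.const_mul (5:ℝ)
      simpa using (tendsto_const_nhds (x := ε) (f := Filter.atTop (α := ℕ))).add h2
    · refine Filter.Eventually.of_forall fun kk => Set.mem_Ici.mpr ?_
      positivity
  have h2 : Tendsto (fun kk : ℕ => ψ (ε + 5*((1:ℝ)/(kk+1)))) atTop (𝓝 (ψ ε)) :=
    ((hψcont ε (Set.mem_Ici.mpr hε.le)).tendsto).comp h1
  have h3 : Tendsto (fun kk : ℕ => ψ (ε + 5*((1:ℝ)/(kk+1))) + 2*((1:ℝ)/(kk+1)))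
      atTop (𝓝 (ψ ε)) := by
    have h4 := hδseq.const_mul (2:ℝ)
    simpa using h2.add h4
  have h4 : ε ≤ ψ ε := by
    refine le_of_tendsto_of_tendsto' tendsto_const_nhds h3 ?_
    intro kk
    exact claim _ (by positivity)
  linarith [hψlt ε hε]

/-- Key auxiliary step: under the `ψ`-contractive condition, any sequence `{x n}` in `K`
with `T x_{2n} = f x_{2n+1}` and `T x_{2n+1} = g x_{2n+2}` gives rise to a Cauchy
sequence `{T x_n}`. -/
theorem contractive_sequence_cauchy
    {X : Type*} [MetricSpace X] (K : Set X) (hK : K.Nonempty)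
    (T f g : X → X)
    (hT : Set.MapsTo T K K) (hf : Set.MapsTo f K K) (hg : Set.MapsTo g K K)
    (hsub : T '' K ⊆ f '' K ∩ g '' K)
    (ψ : ℝ → ℝ)
    (hψmono : MonotoneOn ψ (Set.Ici 0))
    (hψcont : ContinuousOn ψ (Set.Ici 0))
    (hψnonneg : ∀ t ≥ (0 : ℝ), 0 ≤ ψ t)
    (hψlt : ∀ t > (0 : ℝ), ψ t < t)
    (hcontr : ∀ x ∈ K, ∀ y ∈ K,
      dist (T x) (T y) ≤ ψ (min
        (max (max (dist (f x) (g y)) (dist (T x) (f x)))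
          (max (dist (T y) (g y)) ((dist (T x) (g y) + dist (T y) (f x)) / 2)))
        (max (max (dist (f y) (g x)) (dist (T x) (g x)))
          (max (dist (T y) (f y)) ((dist (T x) (f y) + dist (T y) (g x)) / 2)))))
    (x : ℕ → X) (hx : ∀ n, x n ∈ K)
    (heven : ∀ n, T (x (2 * n)) = f (x (2 * n + 1)))
    (hodd : ∀ n, T (x (2 * n + 1)) = g (x (2 * n + 2))) :
    CauchySeq (fun n => T (x n)) := by
  apply contractive_aux (fun n => T (x n)) ψ hψmono hψcont hψnonneg hψlt
  intro a b
  have h := hcontr (x (2*a+1)) (hx _) (x (2*b+2)) (hx _)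
  rw [← heven a, ← hodd b] at h
  refine h.trans (hψmono ?_ ?_ (min_le_left _ _))
  · refine Set.mem_Ici.mpr (le_min ?_ ?_) <;>
      exact le_trans dist_nonneg (le_trans (le_max_left _ _) (le_max_left _ _))
  · exact Set.mem_Ici.mpr (le_trans dist_nonneg (le_trans (le_max_left _ _) (le_max_left _ _)))
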